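/- Let R be an F-finite normal domain of characteristic p > 0, D a Weil divisor on Spec R, and S = ⊕_{i≥0} R(iD) the symbolic Rees algebra, with its ℤ[1/p^e]-grading on F^e_* S. Then every homogeneous S-linear map φ_S : F^e_* S → S is completely determined by its restriction φ = φ_S|_{F^e_* R} : F^e_* R → R to the degree-zero part; that is, the extension of Lemma (extension of p^{-e}-linear maps to S) gives a bijection between R-linear maps F^e_* R → R and homogeneous S-linear maps F^e_* S → S. -/

import Mathlib

open scoped Pointwise

/-- Abstract divisorial data on a normal (Krull) domain `R` with fraction field `K`:
a family of divisorial valuations `v q` indexed by the set `P` of height-one primes of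
`Spec R`, such that `R` is the intersection of the corresponding valuation rings
(this encodes normality of `R`). -/
structure KrullData (R K : Type) [CommRing R] [IsDomain R] [Field K] [Algebra R K]
    [IsFractionRing R K] where
  P : Type
  v : P → K → ℤ
  v_mul : ∀ (q : P) {x y : K}, x ≠ 0 → y ≠ 0 → v q (x * y) = v q x + v q y
  v_add : ∀ (q : P) {x y : K}, x ≠ 0 → y ≠ 0 → x + y ≠ 0 → min (v q x) (v q y) ≤ v q (x + y)
  finite_support : ∀ {x : K}, x ≠ 0 → {q : P | v q x ≠ 0}.Finite
  exists_uniformizer : ∀ q : P, ∃ x : K, x ≠ 0 ∧ v q x = 1 ∧ ∀ q' : P, q' ≠ q → 0 ≤ v q' x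
  mem_range_iff : ∀ {x : K}, x ≠ 0 →
    (x ∈ Set.range (algebraMap R K) ↔ ∀ q : P, 0 ≤ v q x)

namespace KrullData

variable {R K : Type} [CommRing R] [IsDomain R] [Field K] [Algebra R K] [IsFractionRing R K]

/-- `κ.sec D ⊆ K` is the module of sections `R(⌊D⌋) = H^0(Spec R, O(⌊D⌋))`
of the ℚ-Weil divisor `D` (for an integral divisor take integer values of `D`). -/
def sec (κ : KrullData R K) (D : κ.P → ℚ) : Set K :=
  {x : K | x = 0 ∨ ∀ q : κ.P, -(D q) ≤ (κ.v q x : ℚ)}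

/-- The monomials `x·Xⁱ` with `x ∈ R(⌊iD⌋)`; they generate the symbolic Rees algebra. -/
def reesSet (κ : KrullData R K) (D : κ.P → ℚ) : Set (Polynomial K) :=
  {f | ∃ (i : ℕ) (x : K), x ∈ κ.sec (fun q => (i : ℚ) * D q) ∧
    f = Polynomial.C x * Polynomial.X ^ i}

/-- The symbolic Rees algebra (algebra of local sections)
`𝓡(X, D) = ⊕_{i ≥ 0} O_X(⌊iD⌋)`, realized inside `K[X]`. -/
noncomputable def reesAlgebra (κ : KrullData R K) (D : κ.P → ℚ) : Subalgebra R (Polynomial K) :=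
  Algebra.adjoin R (κ.reesSet D)

end KrullData

namespace KrullDataAux

variable {R K : Type} [CommRing R] [IsDomain R] [Field K] [Algebra R K] [IsFractionRing R K]

lemma v_one (κ : KrullData R K) (q : κ.P) : κ.v q 1 = 0 := by
  have h := κ.v_mul q (x := (1 : K)) (y := 1) one_ne_zero one_ne_zero
  rw [one_mul] at h; omega

lemma v_prod (κ : KrullData R K) (q : κ.P) (T : Finset κ.P) (f : κ.P → K)
    (hf : ∀ i ∈ T, f i ≠ 0) :
    κ.v q (∏ i ∈ T, f i) = ∑ i ∈ T, κ.v q (f i) := by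
  classical
  induction T using Finset.cons_induction with
  | empty => simpa using v_one κ q
  | cons a s ha ih =>
      have h1 : f a ≠ 0 := hf a (Finset.mem_cons_self a s)
      have hne : (∏ i ∈ s, f i) ≠ 0 :=
        Finset.prod_ne_zero_iff.mpr (fun i hi => hf i (Finset.mem_cons_of_mem hi))
      rw [Finset.prod_cons, Finset.sum_cons, κ.v_mul q h1 hne,
        ih (fun i hi => hf i (Finset.mem_cons_of_mem hi))]

lemma v_pow (κ : KrullData R K) (q : κ.P) {x : K} (hx : x ≠ 0) (n : ℕ) :
    κ.v q (x ^ n) = n * κ.v q x := by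
  induction n with
  | zero => simpa using v_one κ q
  | succ n ih =>
      rw [pow_succ, κ.v_mul q (pow_ne_zero n hx) hx, ih]
      push_cast; ring

/-- Every divisor with finite support has a nonzero global section. -/
lemma exists_sec (κ : KrullData R K) (E : κ.P → ℤ) (hE : (Function.support E).Finite) :
    ∃ y : K, y ≠ 0 ∧ ∀ q : κ.P, -(E q) ≤ κ.v q y := by
  classical
  set T := hE.toFinset with hT
  choose u hu0 hu1 hunn using κ.exists_uniformizer
  set n : κ.P → ℕ := fun q => (-(E q)).toNat with hn
  have hfne : ∀ i ∈ T, u i ^ n i ≠ 0 := fun i _ => pow_ne_zero _ (hu0 i)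
  refine ⟨∏ q ∈ T, u q ^ n q, Finset.prod_ne_zero_iff.mpr hfne, fun q => ?_⟩
  rw [v_prod κ q T _ hfne]
  have hterm : ∀ i ∈ T, i ≠ q → 0 ≤ κ.v q (u i ^ n i) := by
    intro i _ hiq
    rw [v_pow κ q (hu0 i) (n i)]
    exact mul_nonneg (Int.natCast_nonneg _) (hunn i q (Ne.symm hiq))
  by_cases hq : q ∈ T
  · have h1 : -(E q) ≤ κ.v q (u q ^ n q) := by
      rw [v_pow κ q (hu0 q) (n q), hu1 q, mul_one]
      exact le_trans (Int.self_le_toNat _) (le_refl _)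
    calc -(E q) ≤ κ.v q (u q ^ n q) := h1
      _ ≤ ∑ i ∈ T, κ.v q (u i ^ n i) := by
          refine Finset.single_le_sum (f := fun i => κ.v q (u i ^ n i)) ?_ hq
          intro i hi
          by_cases hiq : i = q
          · subst hiq
            rw [v_pow κ i (hu0 i) (n i), hu1 i, mul_one]
            exact Int.natCast_nonneg _
          · exact hterm i hi hiq
  · have hEq : E q = 0 := by
      by_contra h
      exact hq (hE.mem_toFinset.mpr h)
    rw [hEq, neg_zero]
    exact Finset.sum_nonneg (fun i hi => hterm i hi (fun h => hq (h ▸ hi)))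

end KrullDataAux

/-- `Φ : K → K` is (the unique extension to `K` of) a `p^{-e}`-linear map:
additive with `Φ(a^{p^e}·x) = a·Φ(x)`. -/
def IsSemilinear (p e : ℕ) {K : Type} [Field K] (Φ : K → K) : Prop :=
  (∀ x y : K, Φ (x + y) = Φ x + Φ y) ∧ ∀ a x : K, Φ (a ^ p ^ e * x) = a * Φ x

open Polynomial in
/-- every homogeneous `S`-linear map `φ_S : F^e_* S → S` on the symbolic
Rees algebra `S = ⊕_{i≥0} R(iD)` (realized inside `K[X]`, with `F^e_* S` carrying the
`ℤ[1/p^e]`-grading `[F^e_* S]_{i/p^e} = F^e_* R(iD)`) is completely determined by its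
restriction to the degree-zero part `F^e_* R`; together with the extension result
(Statement 3), restriction to degree zero is a bijection between homogeneous `S`-linear
maps `F^e_* S → S` and `R`-linear maps `F^e_* R → R`. -/
theorem homogeneous_map_determined_by_degree_zero
    {R K : Type} [CommRing R] [IsDomain R] [IsNoetherianRing R] [IsIntegrallyClosed R]
    [Field K] [Algebra R K] [IsFractionRing R K]
    (p e : ℕ) (hp : p.Prime) [CharP R p] [ExpChar R p]
    (hFfin : (frobenius R p).Finite)  -- R is F-finite
    (he : 0 < e)
    (κ : KrullData R K)
    (D : κ.P → ℤ) (hD : (Function.support D).Finite)  -- a Weil divisor on Spec R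
    (Ψ Ψ' : Polynomial K →+ Polynomial K)
    -- `Ψ, Ψ'` are `S`-linear (i.e. `p^{-e}`-linear over `S`):
    (hΨlin : ∀ s ∈ κ.reesAlgebra (fun q => (D q : ℚ)), ∀ g : Polynomial K,
      Ψ (s ^ p ^ e * g) = s * Ψ g)
    (hΨ'lin : ∀ s ∈ κ.reesAlgebra (fun q => (D q : ℚ)), ∀ g : Polynomial K,
      Ψ' (s ^ p ^ e * g) = s * Ψ' g)
    -- `Ψ, Ψ'` are homogeneous for the `ℤ[1/p^e]`-grading:
    (hΨhom : ∀ (x : K) (j : ℕ),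
      (p ^ e ∣ j → ∃ y : K, Ψ (C x * X ^ j) = C y * X ^ (j / p ^ e)) ∧
      (¬ p ^ e ∣ j → Ψ (C x * X ^ j) = 0))
    (hΨ'hom : ∀ (x : K) (j : ℕ),
      (p ^ e ∣ j → ∃ y : K, Ψ' (C x * X ^ j) = C y * X ^ (j / p ^ e)) ∧
      (¬ p ^ e ∣ j → Ψ' (C x * X ^ j) = 0))
    -- `Ψ, Ψ'` map `S` into `S`:
    (hΨS : ∀ g ∈ κ.reesAlgebra (fun q => (D q : ℚ)),
      Ψ g ∈ κ.reesAlgebra (fun q => (D q : ℚ)))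
    (hΨ'S : ∀ g ∈ κ.reesAlgebra (fun q => (D q : ℚ)),
      Ψ' g ∈ κ.reesAlgebra (fun q => (D q : ℚ)))
    -- `Ψ, Ψ'` agree on the degree-zero part `F^e_* R`:
    (hagree : ∀ r : R, Ψ (C (algebraMap R K r)) = Ψ' (C (algebraMap R K r))) :
    ∀ g ∈ κ.reesAlgebra (fun q => (D q : ℚ)), Ψ g = Ψ' g := by
  classical
  have hpe : p ^ e ≠ 0 := pow_ne_zero e hp.pos.ne'
  have hinjK : Function.Injective (algebraMap R K) := IsFractionRing.injective R K
  -- Step 1: Ψ and Ψ' agree on all constants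
  have hconst : ∀ a : K, Ψ (C a) = Ψ' (C a) := by
    intro a
    obtain ⟨b, c, hc, hbc⟩ := IsFractionRing.div_surjective (A := R) (K := K) a
    have hc0 : c ≠ 0 := nonZeroDivisors.ne_zero hc
    have hcK : algebraMap R K c ≠ 0 := fun h => hc0 (hinjK (by simpa using h))
    have hsub : p ^ e - 1 + 1 = p ^ e := Nat.succ_pred_eq_of_pos (Nat.pos_of_ne_zero hpe)
    have hkey : (algebraMap R K c) ^ (p ^ e) * a = algebraMap R K (c ^ (p ^ e - 1) * b) := by
      rw [← hbc, map_mul, map_pow, ← hsub, pow_succ]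
      field_simp
      rw [Nat.add_sub_cancel, mul_comm]
    have hCc : (C (algebraMap R K c) : Polynomial K) ∈ κ.reesAlgebra (fun q => (D q : ℚ)) := by
      rw [← Polynomial.algebraMap_apply]
      exact Subalgebra.algebraMap_mem _ c
    have h1 := hΨlin _ hCc (C a)
    have h1' := hΨ'lin _ hCc (C a)
    have hmon : (C (algebraMap R K c) : Polynomial K) ^ (p ^ e) * C a
        = C (algebraMap R K (c ^ (p ^ e - 1) * b)) := by
      rw [← C_pow, ← C_mul, hkey]
    rw [hmon] at h1 h1'
    have h2 := hagree (c ^ (p ^ e - 1) * b)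
    rw [h1, h1'] at h2
    exact mul_left_cancel₀ (Polynomial.C_ne_zero.mpr hcK) h2
  -- Step 2: Ψ and Ψ' agree on all monomials
  have hmono : ∀ (x : K) (j : ℕ), Ψ (C x * X ^ j) = Ψ' (C x * X ^ j) := by
    intro x j
    by_cases hdvd : p ^ e ∣ j
    · obtain ⟨i, rfl⟩ := hdvd
      have hsupp : (Function.support fun q => (i : ℤ) * D q) ⊆ Function.support D := by
        intro q hq
        simp only [Function.mem_support] at hq ⊢
        intro h; exact hq (by rw [h, mul_zero])
      obtain ⟨y, hy0, hy⟩ := KrullDataAux.exists_sec κ (fun q => (i : ℤ) * D q)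
        (hD.subset hsupp)
      have hysec : y ∈ κ.sec (fun q => (i : ℚ) * (D q : ℚ)) := by
        refine Or.inr fun q => ?_
        have h := hy q
        push_cast
        exact_mod_cast h
      have hsS : (C y * X ^ i : Polynomial K) ∈ κ.reesAlgebra (fun q => (D q : ℚ)) :=
        Algebra.subset_adjoin ⟨i, y, hysec, rfl⟩
      set a := x / y ^ (p ^ e) with ha
      have hya : y ^ (p ^ e) * a = x := mul_div_cancel₀ x (pow_ne_zero _ hy0)
      have hmon : (C y * X ^ i : Polynomial K) ^ (p ^ e) * C a = C x * X ^ (p ^ e * i) := by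
        rw [mul_pow, ← C_pow, ← pow_mul, mul_right_comm, ← C_mul, hya, mul_comm i (p ^ e)]
      have h1 := hΨlin _ hsS (C a)
      have h1' := hΨ'lin _ hsS (C a)
      rw [hmon] at h1 h1'
      rw [h1, h1', hconst a]
    · rw [(hΨhom x (j := _)).2 hdvd, (hΨ'hom x (j := _)).2 hdvd]
  -- Step 3: conclude by additivity
  have hall : ∀ g : Polynomial K, Ψ g = Ψ' g := by
    intro g
    induction g using Polynomial.induction_on' with
    | add f g hf hg => rw [map_add, map_add, hf, hg]
    | monomial n a => rw [← C_mul_X_pow_eq_monomial]; exact hmono a n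
  exact fun g _ => hall g
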